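/- Fix ω₁, ω₂ ∈ ℂ∖{0} with Im(ω₁/ω₂) > 0, set q = exp(πiω₁/ω₂), q̃ = exp(πiω₂/ω₁); let B(z) = z²/(ω₁ω₂) − (ω₁+ω₂)z/(ω₁ω₂) + (ω₁²+3ω₁ω₂+ω₂²)/(6ω₁ω₂), 𝒮(z) = (∏_{m=0}^∞ (1 − q^{2m}·e^{2πiz/ω₂})) / (∏_{m=1}^∞ (1 − q̃^{−2m}·e^{2πiz/ω₁})), S₂(z) = e^{(πi/2)B(z)}·𝒮(z). Let g > 0, g^w := exp(w·ln g), and define the quantum Harish-Chandra function c(ζ) = g^{iζ}·(ω₁ω₂)^{−1/2}·S₂(−iζ)⁻¹ (principal branch of the square root). For N ≥ 2, γ = (γ₁,…,γ_{N−1}) ∈ ℂ^{N−1} and λ = (λ₁,…,λ_N) ∈ ℂ^N, set Q(γ|λ) = ∏_{j=1}^{N−1} ∏_{n=1}^{N} c(γⱼ − λₙ). Assume that for all j, n the values 𝒮(−i(γⱼ−λₙ)), 𝒮(−i(γⱼ−λₙ)+ω₁) and 𝒮(−i(γⱼ−λₙ)+ω₂) are defined (all denominator factors nonzero) and nonzero.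 Then for each j = 1,…,N−1 and each n = 1,…,N the Baxter-type difference equations hold (eⱼ, e'ₙ the standard basis vectors of ℂ^{N−1}, ℂ^N): (i) i^N·Q(γ + iω₁eⱼ|λ) = (g^{ω₁}/2)^{−N}·(∏_{k=1}^N sinh(π(γⱼ−λₖ)/ω₂))·Q(γ|λ); (ii) i^N·Q(γ + iω₂eⱼ|λ) = (g^{ω₂}/2)^{−N}·(∏_{k=1}^N sinh(π(γⱼ−λₖ)/ω₁))·Q(γ|λ); (iii) i^{N−1}·Q(γ|λ − iω₁e'ₙ) = (g^{ω₁}/2)^{−N+1}·(∏_{j=1}^{N−1} sinh(π(γⱼ−λₙ)/ω₂))·Q(γ|λ). -/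

import Mathlib

/-- `qparam ω₁ ω₂ = exp(πi·ω₁/ω₂)`; then `q = qparam ω₁ ω₂` and
`q̃ = qparam ω₂ ω₁`. -/
noncomputable def qparam (ω₁ ω₂ : ℂ) : ℂ :=
  Complex.exp ((Real.pi : ℂ) * Complex.I * ω₁ / ω₂)

/-- The function `𝒮(z) = ∏_{m≥0}(1 − q^{2m}·e^{2πiz/ω₂}) / ∏_{m≥1}(1 − q̃^{−2m}·e^{2πiz/ω₁})`. -/
noncomputable def Sfun (ω₁ ω₂ z : ℂ) : ℂ :=
  (∏' m : ℕ, (1 - qparam ω₁ ω₂ ^ (2 * m) *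
      Complex.exp (2 * (Real.pi : ℂ) * Complex.I * z / ω₂))) /
  (∏' m : ℕ, (1 - qparam ω₂ ω₁ ^ (-(2 * ((m : ℤ) + 1))) *
      Complex.exp (2 * (Real.pi : ℂ) * Complex.I * z / ω₁)))

/-- The Bernoulli-type polynomial `B₂,₂(z|ω₁,ω₂)`. -/
noncomputable def B22 (ω₁ ω₂ z : ℂ) : ℂ :=
  z ^ 2 / (ω₁ * ω₂) - (ω₁ + ω₂) * z / (ω₁ * ω₂)
    + (ω₁ ^ 2 + 3 * ω₁ * ω₂ + ω₂ ^ 2) / (6 * (ω₁ * ω₂))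

/-- The double sine function `S₂(z) = e^{(πi/2)·B₂,₂(z)}·𝒮(z)`. -/
noncomputable def doubleSine (ω₁ ω₂ z : ℂ) : ℂ :=
  Complex.exp ((Real.pi : ℂ) * Complex.I / 2 * B22 ω₁ ω₂ z) * Sfun ω₁ ω₂ z

/-- The quantum Harish-Chandra function
`c(ζ) = g^{iζ}·(ω₁ω₂)^{−1/2}·S₂(−iζ)⁻¹` (principal branch). -/
noncomputable def quantumHC (ω₁ ω₂ : ℂ) (g : ℝ) (ζ : ℂ) : ℂ :=
  Complex.exp (Complex.I * ζ * (Real.log g : ℂ)) * (ω₁ * ω₂) ^ (-(1 / 2 : ℂ)) *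
    (doubleSine ω₁ ω₂ (-(Complex.I * ζ)))⁻¹

/-- The kernel `Q(γ|λ) = ∏_{j=1}^{N−1} ∏_{n=1}^N c(γⱼ − λₙ)` of the
Mellin–Barnes integral representation. -/
noncomputable def QKernel (ω₁ ω₂ : ℂ) (g : ℝ) {N : ℕ}
    (γ : Fin (N - 1) → ℂ) (lam : Fin N → ℂ) : ℂ :=
  ∏ j : Fin (N - 1), ∏ n : Fin N, quantumHC ω₁ ω₂ g (γ j - lam n)


section BaxterAux

open Complex Filter

private lemma multipliable_aux {a : ℂ} (w : ℂ) (ha : ‖a‖ < 1) :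
    Multipliable (fun m : ℕ => 1 - a ^ m * w) := by
  by_cases h0 : ∃ m : ℕ, 1 - a ^ m * w = 0
  · obtain ⟨m, hm⟩ := h0
    refine ⟨0, ?_⟩
    rw [HasProd]
    apply Tendsto.congr' _ tendsto_const_nhds
    filter_upwards [Filter.eventually_ge_atTop ({m} : Finset ℕ)] with s hs
    exact (Finset.prod_eq_zero (hs (Finset.mem_singleton_self m)) hm).symm
  · push_neg at h0
    have hsum : Summable (fun m : ℕ => Complex.log (1 - a ^ m * w)) := by
      apply Summable.of_norm_bounded_eventually_nat
        (g := fun m => 3 / 2 * (‖a‖ ^ m * ‖w‖))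
        (((summable_geometric_of_lt_one (norm_nonneg a) ha).mul_right ‖w‖).mul_left _)
      have htend : Tendsto (fun m : ℕ => ‖a‖ ^ m * ‖w‖) atTop (nhds 0) := by
        simpa using
          (tendsto_pow_atTop_nhds_zero_of_lt_one (norm_nonneg a) ha).mul_const ‖w‖
      filter_upwards [htend.eventually (eventually_le_nhds (by norm_num : (0:ℝ) < 1/2))]
        with m hm
      have h1 : ‖-(a ^ m * w)‖ ≤ 1 / 2 := by
        rw [norm_neg, norm_mul, norm_pow]; exact hm
      have := Complex.norm_log_one_add_half_le_self h1
      rw [norm_neg, norm_mul, norm_pow] at this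
      simpa [sub_eq_add_neg] using this
    exact Complex.multipliable_of_summable_log hsum

private lemma tprod_peel {a : ℂ} (w : ℂ) (ha : ‖a‖ < 1) :
    (∏' m : ℕ, (1 - a ^ m * w)) = (1 - w) * ∏' m : ℕ, (1 - a ^ m * (a * w)) := by
  rw [tprod_eq_zero_mul' (f := fun m : ℕ => 1 - a ^ m * w)]
  · rw [pow_zero, one_mul]
    congr 1
    exact tprod_congr fun m => by ring
  · exact (multipliable_aux (a * w) ha).congr fun m => by ring

private lemma qparam_sq (ω₁ ω₂ : ℂ) :
    qparam ω₁ ω₂ ^ 2 = Complex.exp (2 * (Real.pi : ℂ) * Complex.I * ω₁ / ω₂) := by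
  rw [qparam, ← Complex.exp_nat_mul]
  norm_num
  ring_nf

private lemma norm_exp' (z : ℂ) : ‖Complex.exp z‖ = Real.exp z.re := by
  rw [Complex.norm_exp]

private lemma re_aux (c : ℝ) (τ : ℂ) : ((c : ℂ) * (Complex.I * τ)).re = c * (-τ.im) := by
  simp [Complex.mul_re, Complex.mul_im]

private lemma normA {ω₁ ω₂ : ℂ} (him : 0 < (ω₁ / ω₂).im) :
    ‖qparam ω₁ ω₂ ^ 2‖ < 1 := by
  rw [qparam_sq, norm_exp', Real.exp_lt_one_iff]
  have h : 2 * (Real.pi : ℂ) * Complex.I * ω₁ / ω₂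
      = ((2 * Real.pi : ℝ) : ℂ) * (Complex.I * (ω₁ / ω₂)) := by
    push_cast; ring
  rw [h, re_aux]
  have hπ := Real.pi_pos
  nlinarith

private lemma normB {ω₁ ω₂ : ℂ} (him : 0 < (ω₁ / ω₂).im) (hω₁ : ω₁ ≠ 0) (hω₂ : ω₂ ≠ 0) :
    ‖(qparam ω₂ ω₁ ^ 2)⁻¹‖ < 1 := by
  have hne : ω₁ / ω₂ ≠ 0 := div_ne_zero hω₁ hω₂
  have h21 : (ω₂ / ω₁).im < 0 := by
    have h : ω₂ / ω₁ = (ω₁ / ω₂)⁻¹ := by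
      rw [inv_div]
    rw [h, Complex.inv_im]
    exact div_neg_of_neg_of_pos (by linarith) (Complex.normSq_pos.mpr hne)
  rw [qparam_sq, ← Complex.exp_neg, norm_exp', Real.exp_lt_one_iff]
  have h : -(2 * (Real.pi : ℂ) * Complex.I * ω₂ / ω₁)
      = ((-(2 * Real.pi) : ℝ) : ℂ) * (Complex.I * (ω₂ / ω₁)) := by
    push_cast; ring
  rw [h, re_aux]
  have hπ := Real.pi_pos
  nlinarith

private lemma den_factor (ω₁ ω₂ : ℂ) (m : ℕ) :
    qparam ω₂ ω₁ ^ (-(2 * ((m : ℤ) + 1)))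
      = ((qparam ω₂ ω₁ ^ 2)⁻¹) ^ m * (qparam ω₂ ω₁ ^ 2)⁻¹ := by
  have h : (-(2 * ((m : ℤ) + 1))) = -((2 * (m + 1) : ℕ) : ℤ) := by push_cast; ring
  rw [h, zpow_neg, zpow_natCast, pow_mul, ← inv_pow, pow_succ]

private lemma Sfun_eq (ω₁ ω₂ z : ℂ) :
    Sfun ω₁ ω₂ z =
      (∏' m : ℕ, (1 - (qparam ω₁ ω₂ ^ 2) ^ m *
        Complex.exp (2 * (Real.pi : ℂ) * Complex.I * z / ω₂))) /
      (∏' m : ℕ, (1 - ((qparam ω₂ ω₁ ^ 2)⁻¹) ^ m * ((qparam ω₂ ω₁ ^ 2)⁻¹ *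
        Complex.exp (2 * (Real.pi : ℂ) * Complex.I * z / ω₁)))) := by
  rw [Sfun]
  congr 1
  · exact tprod_congr fun m => by rw [pow_mul]
  · exact tprod_congr fun m => by rw [den_factor]; ring_nf

private lemma exp_shift_self {ω : ℂ} (hω : ω ≠ 0) (z : ℂ) :
    Complex.exp (2 * (Real.pi : ℂ) * Complex.I * (z + ω) / ω)
      = Complex.exp (2 * (Real.pi : ℂ) * Complex.I * z / ω) := by
  have h : 2 * (Real.pi : ℂ) * Complex.I * (z + ω) / ω
      = 2 * (Real.pi : ℂ) * Complex.I * z / ω + 2 * (Real.pi : ℂ) * Complex.I := by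
    field_simp
  rw [h, Complex.exp_add, Complex.exp_two_pi_mul_I, mul_one]

private lemma exp_shift_other {ω ω' : ℂ} (hω : ω ≠ 0) (z : ℂ) :
    Complex.exp (2 * (Real.pi : ℂ) * Complex.I * (z + ω') / ω)
      = qparam ω' ω ^ 2 * Complex.exp (2 * (Real.pi : ℂ) * Complex.I * z / ω) := by
  rw [qparam_sq, ← Complex.exp_add]
  congr 1
  field_simp; ring

private lemma Sfun_shift₁ {ω₁ ω₂ : ℂ} (hω₁ : ω₁ ≠ 0) (hω₂ : ω₂ ≠ 0)
    (him : 0 < (ω₁ / ω₂).im) (z : ℂ) :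
    Sfun ω₁ ω₂ (z + ω₁) * (1 - Complex.exp (2 * (Real.pi : ℂ) * Complex.I * z / ω₂))
      = Sfun ω₁ ω₂ z := by
  rw [Sfun_eq, Sfun_eq]
  rw [exp_shift_self hω₁, exp_shift_other hω₂]
  rw [tprod_peel (Complex.exp (2 * (Real.pi : ℂ) * Complex.I * z / ω₂)) (normA him)]
  rw [div_mul_eq_mul_div]
  ring

private lemma Sfun_shift₂ {ω₁ ω₂ : ℂ} (hω₁ : ω₁ ≠ 0) (hω₂ : ω₂ ≠ 0)
    (him : 0 < (ω₁ / ω₂).im) (z : ℂ)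
    (h1 : 1 - Complex.exp (2 * (Real.pi : ℂ) * Complex.I * z / ω₁) ≠ 0) :
    Sfun ω₁ ω₂ (z + ω₂) * (1 - Complex.exp (2 * (Real.pi : ℂ) * Complex.I * z / ω₁))
      = Sfun ω₁ ω₂ z := by
  have hq : (qparam ω₂ ω₁ ^ 2) ≠ 0 := pow_ne_zero _ (Complex.exp_ne_zero _)
  rw [Sfun_eq, Sfun_eq]
  rw [exp_shift_self hω₂, exp_shift_other hω₁]
  have harg : ∀ m : ℕ,
      (1 - ((qparam ω₂ ω₁ ^ 2)⁻¹) ^ m * ((qparam ω₂ ω₁ ^ 2)⁻¹ *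
        (qparam ω₂ ω₁ ^ 2 * Complex.exp (2 * (Real.pi : ℂ) * Complex.I * z / ω₁))))
      = (1 - ((qparam ω₂ ω₁ ^ 2)⁻¹) ^ m *
          Complex.exp (2 * (Real.pi : ℂ) * Complex.I * z / ω₁)) := by
    intro m
    rw [inv_mul_cancel_left₀ hq]
  rw [tprod_congr harg]
  rw [tprod_peel (Complex.exp (2 * (Real.pi : ℂ) * Complex.I * z / ω₁))
    (normB him hω₁ hω₂)]
  rw [div_mul_eq_mul_div, mul_comm, mul_div_mul_left _ _ h1]

private lemma exp_pi_I_div_two : Complex.exp ((Real.pi : ℂ) * Complex.I / 2) = Complex.I := by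
  have h : (Real.pi : ℂ) * Complex.I / 2 = ((Real.pi : ℂ) / 2) * Complex.I := by ring
  rw [h, Complex.exp_mul_I, Complex.cos_pi_div_two, Complex.sin_pi_div_two, one_mul, zero_add]

private lemma sin_key {ω : ℂ} (z : ℂ) :
    Complex.exp ((Real.pi : ℂ) * Complex.I * z / ω - (Real.pi : ℂ) * Complex.I / 2)
      * (2 * Complex.sin ((Real.pi : ℂ) * z / ω))
      = 1 - Complex.exp (2 * (Real.pi : ℂ) * Complex.I * z / ω) := by
  set X := Complex.exp ((Real.pi : ℂ) * Complex.I * z / ω) with hX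
  have hXne : X ≠ 0 := Complex.exp_ne_zero _
  have h1 : Complex.exp (((Real.pi : ℂ) * z / ω) * Complex.I) = X := by
    rw [hX]; congr 1; ring
  have h2 : Complex.exp (-((Real.pi : ℂ) * z / ω) * Complex.I) = X⁻¹ := by
    rw [← h1, ← Complex.exp_neg]; congr 1; ring
  have h3 : Complex.exp (2 * (Real.pi : ℂ) * Complex.I * z / ω) = X ^ 2 := by
    rw [hX, ← Complex.exp_nat_mul]; congr 1; push_cast; ring
  rw [Complex.exp_sub, exp_pi_I_div_two, Complex.sin, h1, h2, h3, ← hX]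
  field_simp [Complex.I_ne_zero]

private lemma B22_eq {ω₁ ω₂ : ℂ} (hω₁ : ω₁ ≠ 0) (hω₂ : ω₂ ≠ 0) (w : ℂ) :
    B22 ω₁ ω₂ w = (6 * w ^ 2 - 6 * (ω₁ + ω₂) * w + (ω₁ ^ 2 + 3 * ω₁ * ω₂ + ω₂ ^ 2))
      / (6 * (ω₁ * ω₂)) := by
  rw [B22]; field_simp

private lemma B22_shift {ω₁ ω₂ : ℂ} (hω₁ : ω₁ ≠ 0) (hω₂ : ω₂ ≠ 0) (z : ℂ) :
    B22 ω₁ ω₂ (z + ω₁) = B22 ω₁ ω₂ z + (2 * z / ω₂ - 1) := by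
  rw [B22_eq hω₁ hω₂, B22_eq hω₁ hω₂]; field_simp; ring

private lemma B22_shift₁ {ω₁ ω₂ : ℂ} (hω₁ : ω₁ ≠ 0) (hω₂ : ω₂ ≠ 0) (z : ℂ) :
    (Real.pi : ℂ) * Complex.I / 2 * B22 ω₁ ω₂ (z + ω₁)
      = (Real.pi : ℂ) * Complex.I / 2 * B22 ω₁ ω₂ z
        + ((Real.pi : ℂ) * Complex.I * z / ω₂ - (Real.pi : ℂ) * Complex.I / 2) := by
  rw [B22_shift hω₁ hω₂]; ring

private lemma B22_shift₂ {ω₁ ω₂ : ℂ} (hω₁ : ω₁ ≠ 0) (hω₂ : ω₂ ≠ 0) (z : ℂ) :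
    (Real.pi : ℂ) * Complex.I / 2 * B22 ω₁ ω₂ (z + ω₂)
      = (Real.pi : ℂ) * Complex.I / 2 * B22 ω₁ ω₂ z
        + ((Real.pi : ℂ) * Complex.I * z / ω₁ - (Real.pi : ℂ) * Complex.I / 2) := by
  have hswap : ∀ w, B22 ω₁ ω₂ w = B22 ω₂ ω₁ w := by
    intro w; rw [B22, B22]; ring_nf
  rw [hswap, hswap, B22_shift hω₂ hω₁]; ring

private lemma doubleSine_shift₁ {ω₁ ω₂ : ℂ} (hω₁ : ω₁ ≠ 0) (hω₂ : ω₂ ≠ 0)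
    (him : 0 < (ω₁ / ω₂).im) (z : ℂ) :
    doubleSine ω₁ ω₂ (z + ω₁) * (2 * Complex.sin ((Real.pi : ℂ) * z / ω₂))
      = doubleSine ω₁ ω₂ z := by
  rw [doubleSine, doubleSine, B22_shift₁ hω₁ hω₂, Complex.exp_add]
  have key := sin_key (ω := ω₂) z
  have hS := Sfun_shift₁ hω₁ hω₂ him z
  linear_combination
    (Complex.exp ((Real.pi : ℂ) * Complex.I / 2 * B22 ω₁ ω₂ z) * Sfun ω₁ ω₂ (z + ω₁)) * key
    + Complex.exp ((Real.pi : ℂ) * Complex.I / 2 * B22 ω₁ ω₂ z) * hS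

private lemma doubleSine_shift₂ {ω₁ ω₂ : ℂ} (hω₁ : ω₁ ≠ 0) (hω₂ : ω₂ ≠ 0)
    (him : 0 < (ω₁ / ω₂).im) (z : ℂ)
    (h1 : 1 - Complex.exp (2 * (Real.pi : ℂ) * Complex.I * z / ω₁) ≠ 0) :
    doubleSine ω₁ ω₂ (z + ω₂) * (2 * Complex.sin ((Real.pi : ℂ) * z / ω₁))
      = doubleSine ω₁ ω₂ z := by
  rw [doubleSine, doubleSine, B22_shift₂ hω₁ hω₂, Complex.exp_add]
  have key := sin_key (ω := ω₁) z
  have hS := Sfun_shift₂ hω₁ hω₂ him z h1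
  linear_combination
    (Complex.exp ((Real.pi : ℂ) * Complex.I / 2 * B22 ω₁ ω₂ z) * Sfun ω₁ ω₂ (z + ω₂)) * key
    + Complex.exp ((Real.pi : ℂ) * Complex.I / 2 * B22 ω₁ ω₂ z) * hS

private lemma quantumHC_shift₁ {ω₁ ω₂ : ℂ} (hω₁ : ω₁ ≠ 0) (hω₂ : ω₂ ≠ 0)
    (him : 0 < (ω₁ / ω₂).im) (g : ℝ) (ζ : ℂ)
    (hS0 : Sfun ω₁ ω₂ (-(Complex.I * ζ)) ≠ 0) :
    Complex.I * quantumHC ω₁ ω₂ g (ζ + Complex.I * ω₁)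
      = (Complex.exp (ω₁ * (Real.log g : ℂ)) / 2)⁻¹
          * Complex.sinh ((Real.pi : ℂ) * ζ / ω₂) * quantumHC ω₁ ω₂ g ζ := by
  set z := -(Complex.I * ζ) with hz
  have h1 : -(Complex.I * (ζ + Complex.I * ω₁)) = z + ω₁ := by
    rw [hz]; linear_combination (-ω₁) * Complex.I_sq
  have hds := doubleSine_shift₁ hω₁ hω₂ him z
  have hdsz : doubleSine ω₁ ω₂ z ≠ 0 := by
    rw [doubleSine]; exact mul_ne_zero (Complex.exp_ne_zero _) hS0
  have hds1 : doubleSine ω₁ ω₂ (z + ω₁) ≠ 0 := left_ne_zero_of_mul (hds ▸ hdsz)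
  have hsin : (2 * Complex.sin ((Real.pi : ℂ) * z / ω₂)) ≠ 0 :=
    right_ne_zero_of_mul (hds ▸ hdsz)
  have hinv : (doubleSine ω₁ ω₂ (z + ω₁))⁻¹
      = (2 * Complex.sin ((Real.pi : ℂ) * z / ω₂)) * (doubleSine ω₁ ω₂ z)⁻¹ := by
    have e : (doubleSine ω₁ ω₂ (z + ω₁))⁻¹
        * (2 * Complex.sin ((Real.pi : ℂ) * z / ω₂))⁻¹
        = (doubleSine ω₁ ω₂ z)⁻¹ := by rw [← mul_inv, hds]
    rw [← e, mul_comm, mul_assoc, inv_mul_cancel₀ hsin, mul_one]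
  have hsin2 : Complex.sin ((Real.pi : ℂ) * z / ω₂)
      = -Complex.sinh ((Real.pi : ℂ) * ζ / ω₂) * Complex.I := by
    have harg : (Real.pi : ℂ) * z / ω₂ = (-((Real.pi : ℂ) * ζ / ω₂)) * Complex.I := by
      rw [hz]; ring
    rw [harg, Complex.sin_mul_I, Complex.sinh_neg, neg_mul]
  have hexp : Complex.exp (Complex.I * (ζ + Complex.I * ω₁) * (Real.log g : ℂ))
      = Complex.exp (Complex.I * ζ * (Real.log g : ℂ))
        * (Complex.exp (ω₁ * (Real.log g : ℂ)))⁻¹ := by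
    rw [← Complex.exp_neg, ← Complex.exp_add]
    congr 1
    linear_combination (ω₁ * (Real.log g : ℂ)) * Complex.I_sq
  rw [quantumHC, quantumHC, h1, hexp, hinv, hsin2, ← hz]
  linear_combination (-2 * Complex.sinh ((Real.pi : ℂ) * ζ / ω₂)
    * Complex.exp (Complex.I * ζ * (Real.log g : ℂ))
    * (Complex.exp (ω₁ * (Real.log g : ℂ)))⁻¹
    * (ω₁ * ω₂) ^ (-(1 / 2 : ℂ)) * (doubleSine ω₁ ω₂ z)⁻¹) * Complex.I_sq

private lemma quantumHC_shift₂ {ω₁ ω₂ : ℂ} (hω₁ : ω₁ ≠ 0) (hω₂ : ω₂ ≠ 0)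
    (him : 0 < (ω₁ / ω₂).im) (g : ℝ) (ζ : ℂ)
    (hS0 : Sfun ω₁ ω₂ (-(Complex.I * ζ)) ≠ 0)
    (h1e : 1 - Complex.exp (2 * (Real.pi : ℂ) * Complex.I * (-(Complex.I * ζ)) / ω₁) ≠ 0) :
    Complex.I * quantumHC ω₁ ω₂ g (ζ + Complex.I * ω₂)
      = (Complex.exp (ω₂ * (Real.log g : ℂ)) / 2)⁻¹
          * Complex.sinh ((Real.pi : ℂ) * ζ / ω₁) * quantumHC ω₁ ω₂ g ζ := by
  set z := -(Complex.I * ζ) with hz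
  have h1 : -(Complex.I * (ζ + Complex.I * ω₂)) = z + ω₂ := by
    rw [hz]; linear_combination (-ω₂) * Complex.I_sq
  have hds := doubleSine_shift₂ hω₁ hω₂ him z h1e
  have hdsz : doubleSine ω₁ ω₂ z ≠ 0 := by
    rw [doubleSine]; exact mul_ne_zero (Complex.exp_ne_zero _) hS0
  have hds1 : doubleSine ω₁ ω₂ (z + ω₂) ≠ 0 := left_ne_zero_of_mul (hds ▸ hdsz)
  have hsin : (2 * Complex.sin ((Real.pi : ℂ) * z / ω₁)) ≠ 0 :=
    right_ne_zero_of_mul (hds ▸ hdsz)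
  have hinv : (doubleSine ω₁ ω₂ (z + ω₂))⁻¹
      = (2 * Complex.sin ((Real.pi : ℂ) * z / ω₁)) * (doubleSine ω₁ ω₂ z)⁻¹ := by
    have e : (doubleSine ω₁ ω₂ (z + ω₂))⁻¹
        * (2 * Complex.sin ((Real.pi : ℂ) * z / ω₁))⁻¹
        = (doubleSine ω₁ ω₂ z)⁻¹ := by rw [← mul_inv, hds]
    rw [← e, mul_comm, mul_assoc, inv_mul_cancel₀ hsin, mul_one]
  have hsin2 : Complex.sin ((Real.pi : ℂ) * z / ω₁)
      = -Complex.sinh ((Real.pi : ℂ) * ζ / ω₁) * Complex.I := by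
    have harg : (Real.pi : ℂ) * z / ω₁ = (-((Real.pi : ℂ) * ζ / ω₁)) * Complex.I := by
      rw [hz]; ring
    rw [harg, Complex.sin_mul_I, Complex.sinh_neg, neg_mul]
  have hexp : Complex.exp (Complex.I * (ζ + Complex.I * ω₂) * (Real.log g : ℂ))
      = Complex.exp (Complex.I * ζ * (Real.log g : ℂ))
        * (Complex.exp (ω₂ * (Real.log g : ℂ)))⁻¹ := by
    rw [← Complex.exp_neg, ← Complex.exp_add]
    congr 1
    linear_combination (ω₂ * (Real.log g : ℂ)) * Complex.I_sq
  rw [quantumHC, quantumHC, h1, hexp, hinv, hsin2, ← hz]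
  linear_combination (-2 * Complex.sinh ((Real.pi : ℂ) * ζ / ω₁)
    * Complex.exp (Complex.I * ζ * (Real.log g : ℂ))
    * (Complex.exp (ω₂ * (Real.log g : ℂ)))⁻¹
    * (ω₁ * ω₂) ^ (-(1 / 2 : ℂ)) * (doubleSine ω₁ ω₂ z)⁻¹) * Complex.I_sq

end BaxterAux

/-- The kernel `Q(γ|λ)` satisfies the Baxter-type difference equations in
both sets of variables (`γ`-shifts by `iω₁` and `iω₂`, and `λ`-shifts by
`−iω₁`). -/
theorem QKernel_baxter_equations (ω₁ ω₂ : ℂ) (hω₁ : ω₁ ≠ 0) (hω₂ : ω₂ ≠ 0)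
    (him : 0 < (ω₁ / ω₂).im) (g : ℝ) (hg : 0 < g)
    (N : ℕ) (hN : 2 ≤ N) (γ : Fin (N - 1) → ℂ) (lam : Fin N → ℂ)
    (hS : ∀ (j : Fin (N - 1)) (n : Fin N),
      ∀ w ∈ ({-(Complex.I * (γ j - lam n)),
              -(Complex.I * (γ j - lam n)) + ω₁,
              -(Complex.I * (γ j - lam n)) + ω₂} : Set ℂ),
        (∀ m : ℕ, 1 ≤ m →
          1 - qparam ω₂ ω₁ ^ (-(2 * (m : ℤ))) *
            Complex.exp (2 * (Real.pi : ℂ) * Complex.I * w / ω₁) ≠ 0) ∧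
        Sfun ω₁ ω₂ w ≠ 0) :
    ∀ (j : Fin (N - 1)) (n : Fin N),
      (Complex.I ^ N * QKernel ω₁ ω₂ g (Function.update γ j (γ j + Complex.I * ω₁)) lam
        = (Complex.exp (ω₁ * (Real.log g : ℂ)) / 2) ^ (-(N : ℤ)) *
            (∏ k : Fin N, Complex.sinh ((Real.pi : ℂ) * (γ j - lam k) / ω₂)) *
            QKernel ω₁ ω₂ g γ lam) ∧
      (Complex.I ^ N * QKernel ω₁ ω₂ g (Function.update γ j (γ j + Complex.I * ω₂)) lam
        = (Complex.exp (ω₂ * (Real.log g : ℂ)) / 2) ^ (-(N : ℤ)) *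
            (∏ k : Fin N, Complex.sinh ((Real.pi : ℂ) * (γ j - lam k) / ω₁)) *
            QKernel ω₁ ω₂ g γ lam) ∧
      (Complex.I ^ (N - 1) * QKernel ω₁ ω₂ g γ (Function.update lam n (lam n - Complex.I * ω₁))
        = (Complex.exp (ω₁ * (Real.log g : ℂ)) / 2) ^ (-(N : ℤ) + 1) *
            (∏ j' : Fin (N - 1), Complex.sinh ((Real.pi : ℂ) * (γ j' - lam n) / ω₂)) *
            QKernel ω₁ ω₂ g γ lam) := by
  intro j n
  have hSne : ∀ (j' : Fin (N - 1)) (n' : Fin N),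
      Sfun ω₁ ω₂ (-(Complex.I * (γ j' - lam n'))) ≠ 0 :=
    fun j' n' => (hS j' n' _ (Set.mem_insert _ _)).2
  have h1e : ∀ (j' : Fin (N - 1)) (n' : Fin N),
      1 - Complex.exp (2 * (Real.pi : ℂ) * Complex.I
        * (-(Complex.I * (γ j' - lam n'))) / ω₁) ≠ 0 := by
    intro j' n'
    have h := (hS j' n' (-(Complex.I * (γ j' - lam n')) + ω₂)
      (Set.mem_insert_of_mem _ (Set.mem_insert_of_mem _ rfl))).1 1 le_rfl
    rw [exp_shift_other hω₁] at h
    have h2 : qparam ω₂ ω₁ ^ (-(2 * ((1:ℕ) : ℤ))) = (qparam ω₂ ω₁ ^ (2:ℕ))⁻¹ := by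
      rw [show (-(2 * ((1:ℕ) : ℤ))) = -((2:ℕ):ℤ) by norm_num, zpow_neg, zpow_natCast]
    have hq : qparam ω₂ ω₁ ≠ 0 := by rw [qparam]; exact Complex.exp_ne_zero _
    rw [h2, inv_mul_cancel_left₀ (pow_ne_zero 2 hq)] at h
    exact h
  set L : ℂ := (Real.log g : ℂ) with hL
  refine ⟨?_, ?_, ?_⟩
  · -- shift of γ by I ω₁
    have decomp : ∀ v : ℂ, QKernel ω₁ ω₂ g (Function.update γ j v) lam
        = (∏ n' : Fin N, quantumHC ω₁ ω₂ g (v - lam n'))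
          * ∏ x ∈ Finset.univ.erase j,
              ∏ n' : Fin N, quantumHC ω₁ ω₂ g (γ x - lam n') := by
      intro v
      rw [QKernel]
      have h : ∀ j' : Fin (N-1),
          (∏ n' : Fin N, quantumHC ω₁ ω₂ g (Function.update γ j v j' - lam n'))
          = Function.update
              (fun x => ∏ n' : Fin N, quantumHC ω₁ ω₂ g (γ x - lam n')) j
              (∏ n' : Fin N, quantumHC ω₁ ω₂ g (v - lam n')) j' := by
        intro j'
        rcases eq_or_ne j' j with rfl | hne
        · simp
        · rw [Function.update_of_ne hne, Function.update_of_ne hne]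
      rw [Finset.prod_congr rfl (fun j' _ => h j'),
        Finset.prod_update_of_mem (Finset.mem_univ j), Finset.sdiff_singleton_eq_erase]
    have hQ : QKernel ω₁ ω₂ g γ lam
        = (∏ n' : Fin N, quantumHC ω₁ ω₂ g (γ j - lam n'))
          * ∏ x ∈ Finset.univ.erase j,
              ∏ n' : Fin N, quantumHC ω₁ ω₂ g (γ x - lam n') := by
      conv_lhs => rw [← Function.update_eq_self j γ]
      exact decomp (γ j)
    have hkey : Complex.I ^ N
        * (∏ n' : Fin N, quantumHC ω₁ ω₂ g (γ j + Complex.I * ω₁ - lam n'))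
        = (Complex.exp (ω₁ * L) / 2) ^ (-(N : ℤ))
          * (∏ k : Fin N, Complex.sinh ((Real.pi : ℂ) * (γ j - lam k) / ω₂))
          * ∏ n' : Fin N, quantumHC ω₁ ω₂ g (γ j - lam n') := by
      have hzp : (Complex.exp (ω₁ * L) / 2) ^ (-(N : ℤ))
          = ((Complex.exp (ω₁ * L) / 2)⁻¹) ^ N := by
        rw [zpow_neg, zpow_natCast, inv_pow]
      rw [hzp,
        show (Complex.I : ℂ) ^ N = ∏ _k : Fin N, Complex.I by simp,
        show ((Complex.exp (ω₁ * L) / 2)⁻¹) ^ N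
            = ∏ _k : Fin N, (Complex.exp (ω₁ * L) / 2)⁻¹ by rw [Finset.prod_const, Finset.card_fin],
        ← Finset.prod_mul_distrib, ← Finset.prod_mul_distrib, ← Finset.prod_mul_distrib]
      refine Finset.prod_congr rfl fun k _ => ?_
      rw [show γ j + Complex.I * ω₁ - lam k = (γ j - lam k) + Complex.I * ω₁ by ring]
      exact quantumHC_shift₁ hω₁ hω₂ him g (γ j - lam k) (hSne j k)
    rw [decomp (γ j + Complex.I * ω₁), hQ]
    linear_combination (∏ x ∈ Finset.univ.erase j,
      ∏ n' : Fin N, quantumHC ω₁ ω₂ g (γ x - lam n')) * hkey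
  · -- shift of γ by I ω₂
    have decomp : ∀ v : ℂ, QKernel ω₁ ω₂ g (Function.update γ j v) lam
        = (∏ n' : Fin N, quantumHC ω₁ ω₂ g (v - lam n'))
          * ∏ x ∈ Finset.univ.erase j,
              ∏ n' : Fin N, quantumHC ω₁ ω₂ g (γ x - lam n') := by
      intro v
      rw [QKernel]
      have h : ∀ j' : Fin (N-1),
          (∏ n' : Fin N, quantumHC ω₁ ω₂ g (Function.update γ j v j' - lam n'))
          = Function.update
              (fun x => ∏ n' : Fin N, quantumHC ω₁ ω₂ g (γ x - lam n')) j
              (∏ n' : Fin N, quantumHC ω₁ ω₂ g (v - lam n')) j' := by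
        intro j'
        rcases eq_or_ne j' j with rfl | hne
        · simp
        · rw [Function.update_of_ne hne, Function.update_of_ne hne]
      rw [Finset.prod_congr rfl (fun j' _ => h j'),
        Finset.prod_update_of_mem (Finset.mem_univ j), Finset.sdiff_singleton_eq_erase]
    have hQ : QKernel ω₁ ω₂ g γ lam
        = (∏ n' : Fin N, quantumHC ω₁ ω₂ g (γ j - lam n'))
          * ∏ x ∈ Finset.univ.erase j,
              ∏ n' : Fin N, quantumHC ω₁ ω₂ g (γ x - lam n') := by
      conv_lhs => rw [← Function.update_eq_self j γ]
      exact decomp (γ j)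
    have hkey : Complex.I ^ N
        * (∏ n' : Fin N, quantumHC ω₁ ω₂ g (γ j + Complex.I * ω₂ - lam n'))
        = (Complex.exp (ω₂ * L) / 2) ^ (-(N : ℤ))
          * (∏ k : Fin N, Complex.sinh ((Real.pi : ℂ) * (γ j - lam k) / ω₁))
          * ∏ n' : Fin N, quantumHC ω₁ ω₂ g (γ j - lam n') := by
      have hzp : (Complex.exp (ω₂ * L) / 2) ^ (-(N : ℤ))
          = ((Complex.exp (ω₂ * L) / 2)⁻¹) ^ N := by
        rw [zpow_neg, zpow_natCast, inv_pow]
      rw [hzp,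
        show (Complex.I : ℂ) ^ N = ∏ _k : Fin N, Complex.I by simp,
        show ((Complex.exp (ω₂ * L) / 2)⁻¹) ^ N
            = ∏ _k : Fin N, (Complex.exp (ω₂ * L) / 2)⁻¹ by rw [Finset.prod_const, Finset.card_fin],
        ← Finset.prod_mul_distrib, ← Finset.prod_mul_distrib, ← Finset.prod_mul_distrib]
      refine Finset.prod_congr rfl fun k _ => ?_
      rw [show γ j + Complex.I * ω₂ - lam k = (γ j - lam k) + Complex.I * ω₂ by ring]
      exact quantumHC_shift₂ hω₁ hω₂ him g (γ j - lam k) (hSne j k) (h1e j k)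
    rw [decomp (γ j + Complex.I * ω₂), hQ]
    linear_combination (∏ x ∈ Finset.univ.erase j,
      ∏ n' : Fin N, quantumHC ω₁ ω₂ g (γ x - lam n')) * hkey
  · -- shift of lam by -I ω₁
    have decomp : ∀ v : ℂ, QKernel ω₁ ω₂ g γ (Function.update lam n v)
        = (∏ j' : Fin (N-1), quantumHC ω₁ ω₂ g (γ j' - v))
          * ∏ x ∈ Finset.univ.erase n,
              ∏ j' : Fin (N-1), quantumHC ω₁ ω₂ g (γ j' - lam x) := by
      intro v
      rw [QKernel, Finset.prod_comm]
      have h : ∀ n' : Fin N,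
          (∏ j' : Fin (N-1), quantumHC ω₁ ω₂ g (γ j' - Function.update lam n v n'))
          = Function.update
              (fun x => ∏ j' : Fin (N-1), quantumHC ω₁ ω₂ g (γ j' - lam x)) n
              (∏ j' : Fin (N-1), quantumHC ω₁ ω₂ g (γ j' - v)) n' := by
        intro n'
        rcases eq_or_ne n' n with rfl | hne
        · simp
        · rw [Function.update_of_ne hne, Function.update_of_ne hne]
      rw [Finset.prod_congr rfl (fun n' _ => h n'),
        Finset.prod_update_of_mem (Finset.mem_univ n), Finset.sdiff_singleton_eq_erase]
    have hQ : QKernel ω₁ ω₂ g γ lam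
        = (∏ j' : Fin (N-1), quantumHC ω₁ ω₂ g (γ j' - lam n))
          * ∏ x ∈ Finset.univ.erase n,
              ∏ j' : Fin (N-1), quantumHC ω₁ ω₂ g (γ j' - lam x) := by
      conv_lhs => rw [← Function.update_eq_self n lam]
      exact decomp (lam n)
    have hkey : Complex.I ^ (N - 1)
        * (∏ j' : Fin (N-1), quantumHC ω₁ ω₂ g (γ j' - (lam n - Complex.I * ω₁)))
        = (Complex.exp (ω₁ * L) / 2) ^ (-(N : ℤ) + 1)
          * (∏ j' : Fin (N-1), Complex.sinh ((Real.pi : ℂ) * (γ j' - lam n) / ω₂))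
          * ∏ j' : Fin (N-1), quantumHC ω₁ ω₂ g (γ j' - lam n) := by
      have hzp : (Complex.exp (ω₁ * L) / 2) ^ (-(N : ℤ) + 1)
          = ((Complex.exp (ω₁ * L) / 2)⁻¹) ^ (N - 1) := by
        have hcast : (-(N : ℤ) + 1) = -(((N - 1 : ℕ)) : ℤ) := by
          rw [Nat.cast_sub (by omega : 1 ≤ N)]; push_cast; ring
        rw [hcast, zpow_neg, zpow_natCast, inv_pow]
      rw [hzp,
        show (Complex.I : ℂ) ^ (N - 1) = ∏ _k : Fin (N-1), Complex.I by simp,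
        show ((Complex.exp (ω₁ * L) / 2)⁻¹) ^ (N - 1)
            = ∏ _k : Fin (N-1), (Complex.exp (ω₁ * L) / 2)⁻¹ by rw [Finset.prod_const, Finset.card_fin],
        ← Finset.prod_mul_distrib, ← Finset.prod_mul_distrib, ← Finset.prod_mul_distrib]
      refine Finset.prod_congr rfl fun k _ => ?_
      rw [show γ k - (lam n - Complex.I * ω₁) = (γ k - lam n) + Complex.I * ω₁ by ring]
      exact quantumHC_shift₁ hω₁ hω₂ him g (γ k - lam n) (hSne k n)
    rw [decomp (lam n - Complex.I * ω₁), hQ]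
    linear_combination (∏ x ∈ Finset.univ.erase n,
      ∏ j' : Fin (N-1), quantumHC ω₁ ω₂ g (γ j' - lam x)) * hkey
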